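/- Let (G,σ) be a finite simple graph with a linear order on its vertices, and let G□G carry the lexicographic order induced by σ on both factors. Then FF(G□G, lex) = 2^⌈log₂ FF(G,σ)⌉. -/

import Mathlib

open SimpleGraph

/-- First-Fit (greedy) coloring of `G` with respect to the vertex ordering given by the
injective position function `ord` (vertex `u` comes before `v` iff `ord u < ord v`).
Each vertex receives the smallest positive integer not used on earlier neighbors. -/
noncomputable def firstFit {V : Type*} (G : SimpleGraph V) (ord : V → ℕ) : V → ℕ :=
  (InvImage.wf ord Nat.lt_wfRel.wf).fix
    (fun v ih => sInf {c : ℕ | 1 ≤ c ∧ ∀ u, ∀ h : ord u < ord v, G.Adj u v → ih u h ≠ c})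

/-- `FFColors G ord` is the number of colors used by the First-Fit coloring. -/
noncomputable def FFColors {V : Type*} [Fintype V] (G : SimpleGraph V) (ord : V → ℕ) : ℕ :=
  (Finset.univ.image (firstFit G ord)).card

open Classical in
/-- First-Fit coloring of `(G, ord)` subject to the pre-coloring `C₀` on the set `S`:
vertices of `S` keep their pre-assigned colors and are skipped by the scan; every other
vertex receives the smallest positive integer not already assigned (or pre-assigned)
to a neighbor. -/
noncomputable def firstFitWith {V : Type*} (G : SimpleGraph V) (ord : V → ℕ)
    (S : Set V) (C₀ : V → ℕ) : V → ℕ :=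
  (InvImage.wf ord Nat.lt_wfRel.wf).fix
    (fun v ih =>
      if v ∈ S then C₀ v
      else sInf {c : ℕ | 1 ≤ c ∧ (∀ u, G.Adj u v → u ∈ S → C₀ u ≠ c) ∧
        ∀ u, ∀ h : ord u < ord v, G.Adj u v → u ∉ S → ih u h ≠ c})

/-- Position function of the lexicographic order on `V × W` induced by the position
functions `σ` on `V` and `σ'` on `W` (for injective `σ, σ'`: `(u,v)` comes before
`(u',v')` iff `σ u < σ u'`, or `u = u'` and `σ' v < σ' v'`). -/
noncomputable def lexPos {V W : Type*} [Fintype W] (σ : V → ℕ) (σ' : W → ℕ) : V × W → ℕ :=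
  fun p => σ p.1 * (Finset.univ.sup σ' + 1) + σ' p.2

/-- A proper coloring with colors in the positive integers. -/
def IsProperColoring {V : Type*} (G : SimpleGraph V) (C : V → ℕ) : Prop :=
  (∀ v, 1 ≤ C v) ∧ ∀ ⦃u v⦄, G.Adj u v → C u ≠ C v

/-- `D` is a `(C, ord)`-descent: `D = {v} ∪ N` where `C v = y`, `x < y` is a (positive)
color, `N` is the set of neighbors of `v` of color `x`, and every `u ∈ N` comes after
`v` in the order. -/
def IsDescent {V : Type*} (G : SimpleGraph V) (ord : V → ℕ) (C : V → ℕ) (D : Set V) : Prop :=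
  ∃ v x, 1 ≤ x ∧ x < C v ∧
    (∀ u, G.Adj u v → C u = x → ord v < ord u) ∧
    D = insert v {u | G.Adj u v ∧ C u = x}

/-- The Grundy number: the maximum of `FFColors G ord` over all vertex orderings. -/
noncomputable def grundy {V : Type*} [Fintype V] (G : SimpleGraph V) : ℕ :=
  sSup {n | ∃ ord : V → ℕ, Function.Injective ord ∧ FFColors G ord = n}

/-- The independence number of `G`. -/
noncomputable def indepNum {V : Type*} [Fintype V] (G : SimpleGraph V) : ℕ :=
  sSup {n | ∃ s : Finset V, (∀ u ∈ s, ∀ v ∈ s, ¬ G.Adj u v) ∧ s.card = n}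

/-- An `m × n` Latin rectangle: entries in `{1, …, n}`, no repeats in rows or columns. -/
def IsLatinRectangle {m n : ℕ} (R : Fin m → Fin n → ℕ) : Prop :=
  (∀ i j, R i j ∈ Finset.Icc 1 n) ∧ (∀ i, Function.Injective (R i)) ∧
    (∀ j, Function.Injective (fun i => R i j))

/-- `S` is a greedy defining set of the rectangle `R` (cells scanned in lexicographic,
i.e. row-by-row, order): the greedy completion, which skips the cells of `S` (fixed to
their values in `R`) and places in each other cell the smallest positive integer not yet
appearing in its row or column, reproduces `R`.  This is First-Fit on the rook's graph
`K_m □ K_n` subject to the pre-coloring of `S` by `R`. -/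
noncomputable def IsRectGDS {m n : ℕ} (R : Fin m → Fin n → ℕ) (S : Set (Fin m × Fin n)) : Prop :=
  firstFitWith ((⊤ : SimpleGraph (Fin m)).boxProd (⊤ : SimpleGraph (Fin n)))
    (lexPos Fin.val Fin.val) S (fun p => R p.1 p.2) = fun p => R p.1 p.2

/-- The Latin square `L_k` of order `2^k`: the entry in row `i`, column `j` is
`2^k - (i XOR j)`; equivalently the `k`-fold tensor product of `[[2,1],[1,2]]`. -/
def Lsquare (k : ℕ) : Fin (2 ^ k) → Fin (2 ^ k) → ℕ :=
  fun i j => 2 ^ k - (i.val ^^^ j.val)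

lemma firstFit_eq {V : Type*} (G : SimpleGraph V) (ord : V → ℕ) (v : V) :
    firstFit G ord v =
      sInf {c : ℕ | 1 ≤ c ∧ ∀ u, ord u < ord v → G.Adj u v → firstFit G ord u ≠ c} := by
  rw [firstFit, WellFounded.fix_eq]

lemma firstFit_mem {V : Type*} [Fintype V] (G : SimpleGraph V) (ord : V → ℕ) (v : V) :
    firstFit G ord v ∈
      {c : ℕ | 1 ≤ c ∧ ∀ u, ord u < ord v → G.Adj u v → firstFit G ord u ≠ c} := by
  rw [firstFit_eq]
  apply Nat.sInf_mem
  exact ⟨Finset.univ.sup (firstFit G ord) + 1, Nat.le_add_left _ _,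
    fun u _ _ => Nat.ne_of_lt (Nat.lt_succ_of_le (Finset.le_sup (Finset.mem_univ u)))⟩

lemma firstFit_pos {V : Type*} [Fintype V] (G : SimpleGraph V) (ord : V → ℕ) (v : V) :
    1 ≤ firstFit G ord v := (firstFit_mem G ord v).1

lemma firstFit_exists_lt {V : Type*} (G : SimpleGraph V) (ord : V → ℕ) {v : V} {x : ℕ}
    (hx1 : 1 ≤ x) (hx : x < firstFit G ord v) :
    ∃ u, ord u < ord v ∧ G.Adj u v ∧ firstFit G ord u = x := by
  by_contra h
  push_neg at h
  have hmem : x ∈ {c : ℕ | 1 ≤ c ∧ ∀ u, ord u < ord v → G.Adj u v → firstFit G ord u ≠ c} :=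
    ⟨hx1, fun u hu hadj => h u hu hadj⟩
  rw [firstFit_eq] at hx
  exact absurd (Nat.sInf_le hmem) (by omega)


lemma lexPos_lt_left {V : Type*} [Fintype V] (σ : V → ℕ) {u u' : V} (v : V) :
    lexPos σ σ (u', v) < lexPos σ σ (u, v) ↔ σ u' < σ u := by
  simp only [lexPos, Nat.add_lt_add_iff_right]
  exact Nat.mul_lt_mul_right (Nat.succ_pos _)

lemma lexPos_lt_right {V : Type*} [Fintype V] (σ : V → ℕ) (u : V) {v v' : V} :
    lexPos σ σ (u, v') < lexPos σ σ (u, v) ↔ σ v' < σ v := by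
  simp only [lexPos, Nat.add_lt_add_iff_left]

lemma firstFit_boxProd {V : Type*} [Fintype V] (G : SimpleGraph V) (σ : V → ℕ) :
    ∀ p : V × V, firstFit (G.boxProd G) (lexPos σ σ) p
      = ((firstFit G σ p.1 - 1) ^^^ (firstFit G σ p.2 - 1)) + 1 := by
  intro p
  induction p using (InvImage.wf (lexPos σ σ) Nat.lt_wfRel.wf).induction with
  | _ p ih =>
  obtain ⟨u, v⟩ := p
  have ih' : ∀ q : V × V, lexPos σ σ q < lexPos σ σ (u, v) →
      firstFit (G.boxProd G) (lexPos σ σ) q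
        = ((firstFit G σ q.1 - 1) ^^^ (firstFit G σ q.2 - 1)) + 1 := fun q hq => ih q hq
  have hu1 := firstFit_pos G σ u
  have hv1 := firstFit_pos G σ v
  set a := firstFit G σ u - 1 with ha
  set b := firstFit G σ v - 1 with hb
  set S := {c : ℕ | 1 ≤ c ∧ ∀ q, lexPos σ σ q < lexPos σ σ (u, v) →
      (G.boxProd G).Adj q (u, v) → firstFit (G.boxProd G) (lexPos σ σ) q ≠ c} with hSdef
  have hS : firstFit (G.boxProd G) (lexPos σ σ) (u, v) = sInf S := firstFit_eq _ _ _
  have hmem : (a ^^^ b) + 1 ∈ S := by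
    refine ⟨Nat.le_add_left _ _, ?_⟩
    intro q hq hadj
    rw [ih' q hq]
    rw [boxProd_adj] at hadj
    rcases hadj with ⟨h1, h2⟩ | ⟨h1, h2⟩
    · obtain ⟨u', v'⟩ := q
      simp only at h1 h2 ⊢
      rw [h2] at hq ⊢
      rw [← hb]
      have hlt : σ u' < σ u := (lexPos_lt_left σ v).mp hq
      have hne : firstFit G σ u' ≠ firstFit G σ u := (firstFit_mem G σ u).2 u' hlt h1
      have hu'1 := firstFit_pos G σ u'
      have hxne : firstFit G σ u' - 1 ≠ a := by omega
      intro hcon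
      have hcon' : (firstFit G σ u' - 1) ^^^ b = a ^^^ b := by omega
      exact hxne (Nat.xor_left_inj.mp hcon')
    · obtain ⟨u', v'⟩ := q
      simp only at h1 h2 ⊢
      rw [h2] at hq ⊢
      rw [← ha]
      have hlt : σ v' < σ v := (lexPos_lt_right σ u).mp hq
      have hne : firstFit G σ v' ≠ firstFit G σ v := (firstFit_mem G σ v).2 v' hlt h1
      have hv'1 := firstFit_pos G σ v'
      have hxne : firstFit G σ v' - 1 ≠ b := by omega
      intro hcon
      have hcon' : a ^^^ (firstFit G σ v' - 1) = a ^^^ b := by omega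
      exact hxne (Nat.xor_right_inj.mp hcon')
  rw [hS]
  refine le_antisymm (Nat.sInf_le hmem) ?_
  by_contra hlt
  push_neg at hlt
  have hm := Nat.sInf_mem (⟨_, hmem⟩ : S.Nonempty)
  set m := sInf S with hmdef
  have hm1 : 1 ≤ m := hm.1
  have hmab : m - 1 < a ^^^ b := by omega
  rcases Nat.lt_xor_cases hmab with h | h
  · obtain ⟨u', hlt', hadj', hc'⟩ :=
      firstFit_exists_lt G σ (v := u) (x := ((m - 1) ^^^ b) + 1) (Nat.le_add_left _ _) (by omega)
    have hq : lexPos σ σ (u', v) < lexPos σ σ (u, v) := (lexPos_lt_left σ v).mpr hlt'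
    apply hm.2 (u', v) hq (by rw [boxProd_adj]; left; exact ⟨hadj', rfl⟩)
    rw [ih' _ hq]
    simp only [hc']
    rw [Nat.succ_sub_one, Nat.xor_xor_cancel_right]
    omega
  · obtain ⟨v', hlt', hadj', hc'⟩ :=
      firstFit_exists_lt G σ (v := v) (x := ((m - 1) ^^^ a) + 1) (Nat.le_add_left _ _) (by omega)
    have hq : lexPos σ σ (u, v') < lexPos σ σ (u, v) := (lexPos_lt_right σ u).mpr hlt'
    apply hm.2 (u, v') hq (by rw [boxProd_adj]; right; exact ⟨hadj', rfl⟩)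
    rw [ih' _ hq]
    simp only [hc']
    rw [Nat.succ_sub_one, Nat.xor_comm, Nat.xor_xor_cancel_right]
    omega

lemma image_firstFit {V : Type*} [Fintype V] [Nonempty V] (G : SimpleGraph V) (σ : V → ℕ) :
    Finset.univ.image (firstFit G σ) = Finset.Icc 1 (FFColors G σ) := by
  have hne : (Finset.univ.image (firstFit G σ)).Nonempty :=
    Finset.Nonempty.image Finset.univ_nonempty _
  obtain ⟨k, hk⟩ : ∃ k, Finset.univ.image (firstFit G σ) = Finset.Icc 1 k := by
    refine ⟨(Finset.univ.image (firstFit G σ)).max' hne, ?_⟩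
    apply Finset.ext
    intro x
    simp only [Finset.mem_Icc]
    constructor
    · intro hx
      refine ⟨?_, Finset.le_max' _ _ hx⟩
      obtain ⟨v, _, rfl⟩ := Finset.mem_image.mp hx
      exact firstFit_pos G σ v
    · rintro ⟨h1, h2⟩
      obtain ⟨v, _, hv⟩ := Finset.mem_image.mp
        ((Finset.univ.image (firstFit G σ)).max'_mem hne)
      rcases eq_or_lt_of_le h2 with rfl | h2
      · exact (Finset.univ.image (firstFit G σ)).max'_mem hne
      · obtain ⟨u, _, _, hu⟩ := firstFit_exists_lt G σ h1 (hv ▸ h2)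
        exact Finset.mem_image.mpr ⟨u, Finset.mem_univ u, hu⟩
  have hck : FFColors G σ = k := by
    rw [FFColors, hk, Nat.card_Icc]
    omega
  rw [hk, hck]

lemma testBit_of_between {s b : ℕ} (h1 : 2 ^ s ≤ b) (h2 : b < 2 ^ (s + 1)) :
    b.testBit s = true := by
  obtain ⟨r, rfl⟩ : ∃ r, b = 2 ^ s + r := ⟨b - 2 ^ s, by omega⟩
  have hr : r < 2 ^ s := by
    rw [pow_succ] at h2; omega
  rw [Nat.testBit_two_pow_add_eq, Nat.testBit_lt_two_pow hr]
  rfl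

lemma xor_top_lt {s m : ℕ} (h1 : 2 ^ s ≤ m) (h2 : m < 2 ^ (s + 1)) : m ^^^ 2 ^ s < 2 ^ s := by
  by_contra h
  push_neg at h
  have hpow : (2 : ℕ) ^ s < 2 ^ (s + 1) := Nat.pow_lt_pow_succ one_lt_two
  have hx2 : m ^^^ 2 ^ s < 2 ^ (s + 1) := Nat.xor_lt_two_pow h2 hpow
  have ht := testBit_of_between h hx2
  rw [Nat.testBit_xor, testBit_of_between h1 h2, Nat.testBit_two_pow_self] at ht
  simp at ht


/-- `FF(G □ G, lex) = 2 ^ ⌈log₂ FF(G, σ)⌉`. -/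
theorem FF_boxProd_self_lex_eq_pow {V : Type*} [Fintype V] [Nonempty V]
    (G : SimpleGraph V) (σ : V → ℕ) (hσ : Function.Injective σ) :
    FFColors (G.boxProd G) (lexPos σ σ) = 2 ^ Nat.clog 2 (FFColors G σ) := by
  classical
  set K := FFColors G σ with hK
  have hK1 : 1 ≤ K := by
    rw [hK, FFColors]
    exact Finset.card_pos.mpr (Finset.Nonempty.image Finset.univ_nonempty _)
  set t := Nat.clog 2 K with ht
  have hKle : K ≤ 2 ^ t := Nat.le_pow_clog one_lt_two _
  have himg : Finset.univ.image (firstFit G σ) = Finset.Icc 1 K := image_firstFit G σ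
  have hfun : firstFit (G.boxProd G) (lexPos σ σ)
      = fun p : V × V => ((firstFit G σ p.1 - 1) ^^^ (firstFit G σ p.2 - 1)) + 1 :=
    funext (firstFit_boxProd G σ)
  unfold FFColors
  rw [hfun]
  have hmem : ∀ y, 1 ≤ y → y ≤ K → ∃ w : V, firstFit G σ w = y := by
    intro y hy1 hy2
    have hmem' : y ∈ Finset.Icc 1 K := Finset.mem_Icc.mpr ⟨hy1, hy2⟩
    rw [← himg] at hmem'
    obtain ⟨w, _, hw⟩ := Finset.mem_image.mp hmem'
    exact ⟨w, hw⟩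
  have hcol : ∀ w : V, 1 ≤ firstFit G σ w ∧ firstFit G σ w ≤ K := by
    intro w
    have : firstFit G σ w ∈ Finset.Icc 1 K := by
      rw [← himg]; exact Finset.mem_image_of_mem _ (Finset.mem_univ w)
    exact Finset.mem_Icc.mp this
  have himage : Finset.univ.image
      (fun p : V × V => ((firstFit G σ p.1 - 1) ^^^ (firstFit G σ p.2 - 1)) + 1)
      = Finset.Icc 1 (2 ^ t) := by
    apply Finset.ext
    intro x
    simp only [Finset.mem_image, Finset.mem_univ, true_and, Finset.mem_Icc]
    constructor
    · rintro ⟨⟨u, v⟩, rfl⟩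
      dsimp only
      obtain ⟨hu1, hu2⟩ := hcol u
      obtain ⟨hv1, hv2⟩ := hcol v
      have hux : firstFit G σ u - 1 < 2 ^ t := by omega
      have hvx : firstFit G σ v - 1 < 2 ^ t := by omega
      have := Nat.xor_lt_two_pow hux hvx
      omega
    · rintro ⟨hx1, hx2⟩
      by_cases hxK : x - 1 < K
      · obtain ⟨u, hu⟩ := hmem x hx1 (by omega)
        obtain ⟨v, hv⟩ := hmem 1 le_rfl hK1
        refine ⟨(u, v), ?_⟩
        simp only [hu, hv, Nat.sub_self, Nat.xor_zero]
        omega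
      · push_neg at hxK
        have ht1 : 1 ≤ t := by
          by_contra h
          have h20 : (2 : ℕ) ^ t = 1 := by
            simp [show t = 0 by omega]
          omega
        have hpow : 2 ^ (t - 1) < K := (Nat.lt_clog_iff_pow_lt one_lt_two).mp (by omega)
        have hx2' : x - 1 < 2 ^ (t - 1 + 1) := by
          rw [show t - 1 + 1 = t by omega]; omega
        have hge : 2 ^ (t - 1) ≤ x - 1 := by omega
        have hb := xor_top_lt hge hx2'
        obtain ⟨u, hu⟩ := hmem (2 ^ (t - 1) + 1) (by omega) (by omega)
        obtain ⟨v, hv⟩ := hmem (((x - 1) ^^^ 2 ^ (t - 1)) + 1) (by omega) (by omega)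
        refine ⟨(u, v), ?_⟩
        simp only [hu, hv, Nat.add_sub_cancel]
        rw [Nat.xor_comm (x - 1) (2 ^ (t - 1)), Nat.xor_xor_cancel_left]
        omega
  rw [himage, Nat.card_Icc]
  omega
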